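/- arXiv:1211.1621 — 2 statements merged into one kernel-verified Lean document; each statement's English description precedes it below -/
import Mathlib

section
/- Let n ≥ 2. Let f̃ : ℝ^{n×n} → ℝ be continuously differentiable, positive, and spectral (f̃(QZQᵀ) = f̃(Z) for every Q ∈ O(n) and every Z ∈ ℝ^{n×n}), with ∫_{SO(n)} f̃ dμ = 1. Fix R ∈ SO(n) and the score map G(Z) = (1/f̃(Z))·skew((∇f̃(Z))ᵀZ). For 1 ≤ p < q ≤ n define h_{pq}(Z) = ⟨G(Z), R·E_{pq}·Rᵀ⟩, where E_{pq} is the n×n matrix with (p,q) entry 1/√2, (q,p) entry −1/√2 and zeros elsewhere. Then the random variables h_{pq} are identically distributed under the density f̃: for every s ∈ ℝ and all index pairs (p,q), (r,s') with p<q, r<s', ∫_{{Z ∈ SO(n) : h_{pq}(Z) ≤ s}} f̃(Z) dμ(Z) = ∫_{{Z ∈ SO(n) : h_{rs'}(Z) ≤ s}} f̃(Z) dμ(Z). -/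
open Matrix MeasureTheory Real

noncomputable section

attribute [local instance] Matrix.normedAddCommGroup Matrix.normedSpace

/-- The special orthogonal group `SO(n)`, as a set of `n × n` real matrices. -/
def SO (n : ℕ) : Set (Matrix (Fin n) (Fin n) ℝ) :=
  {A | A * Aᵀ = 1 ∧ A.det = 1}

/-- The orthogonal group `O(n)`, as a set of `n × n` real matrices. -/
def ON (n : ℕ) : Set (Matrix (Fin n) (Fin n) ℝ) :=
  {A | A * Aᵀ = 1}

instance {n : ℕ} : MeasurableSpace (Matrix (Fin n) (Fin n) ℝ) :=
  (inferInstance : MeasurableSpace (Fin n → Fin n → ℝ))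

/-- `μ` is the Haar probability measure of `SO(n)`. -/
def IsHaarSO (n : ℕ) (μ : Measure (Matrix (Fin n) (Fin n) ℝ)) : Prop :=
  IsProbabilityMeasure μ ∧ μ (SO n)ᶜ = 0 ∧
    (∀ g ∈ SO n, Measure.map (fun Z => g * Z) μ = μ) ∧
    (∀ g ∈ SO n, Measure.map (fun Z => Z * g) μ = μ)

/-- The skew-symmetric part `(A - Aᵀ)/2` of a square matrix. -/
def skewPart {n : ℕ} (A : Matrix (Fin n) (Fin n) ℝ) : Matrix (Fin n) (Fin n) ℝ :=
  (2 : ℝ)⁻¹ • (A - Aᵀ)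

/-- The Frobenius inner product `⟨A, B⟩ = trace(Aᵀ B)`. -/
def frobInner {n : ℕ} (A B : Matrix (Fin n) (Fin n) ℝ) : ℝ :=
  (Aᵀ * B).trace

/-- The Euclidean (Frobenius) gradient of `f : ℝ^{n×n} → ℝ`. -/
def grad {n : ℕ} (f : Matrix (Fin n) (Fin n) ℝ → ℝ) (Z : Matrix (Fin n) (Fin n) ℝ) :
    Matrix (Fin n) (Fin n) ℝ :=
  Matrix.of fun i j => fderiv ℝ f Z (Matrix.single i j 1)

/-- The score map `G(Z) = (1 / f(Z)) · skew((∇f(Z))ᵀ Z)`. -/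
def scoreG {n : ℕ} (f : Matrix (Fin n) (Fin n) ℝ → ℝ) (Z : Matrix (Fin n) (Fin n) ℝ) :
    Matrix (Fin n) (Fin n) ℝ :=
  (f Z)⁻¹ • skewPart ((grad f Z)ᵀ * Z)

/-- The elementary skew-symmetric matrix `E_{pq}` with `(p,q)` entry `1/√2`, `(q,p)` entry
`-1/√2` and zeros elsewhere. -/
def Ebasis {n : ℕ} (p q : Fin n) : Matrix (Fin n) (Fin n) ℝ :=
  (Real.sqrt 2)⁻¹ • (Matrix.single p q 1 - Matrix.single q p 1)

/-- `h_{pq}(Z) = ⟨G(Z), R · E_{pq} · Rᵀ⟩`. -/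
def hFun {n : ℕ} (f : Matrix (Fin n) (Fin n) ℝ → ℝ) (R : Matrix (Fin n) (Fin n) ℝ)
    (p q : Fin n) (Z : Matrix (Fin n) (Fin n) ℝ) : ℝ :=
  frobInner (scoreG f Z) (R * Ebasis p q * Rᵀ)


section Aux
variable {n : ℕ}

def sperm (σ : Equiv.Perm (Fin n)) (ε : Fin n → ℝ) : Matrix (Fin n) (Fin n) ℝ :=
  Matrix.of fun i j => if i = σ j then ε j else 0

lemma mul_sperm_apply (σ : Equiv.Perm (Fin n)) (ε : Fin n → ℝ) (A : Matrix (Fin n) (Fin n) ℝ)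
    (i b : Fin n) : (A * sperm σ ε) i b = A i (σ b) * ε b := by
  simp [sperm, Matrix.mul_apply, mul_ite]

lemma sperm_transpose_mul_apply (σ : Equiv.Perm (Fin n)) (ε : Fin n → ℝ)
    (A : Matrix (Fin n) (Fin n) ℝ) (a j : Fin n) :
    ((sperm σ ε)ᵀ * A) a j = ε a * A (σ a) j := by
  simp [sperm, Matrix.mul_apply, ite_mul]

lemma sperm_conj_apply (σ : Equiv.Perm (Fin n)) (ε : Fin n → ℝ)
    (A : Matrix (Fin n) (Fin n) ℝ) (a b : Fin n) :
    ((sperm σ ε)ᵀ * A * sperm σ ε) a b = ε a * A (σ a) (σ b) * ε b := by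
  rw [mul_sperm_apply, sperm_transpose_mul_apply]

lemma sperm_orth (σ : Equiv.Perm (Fin n)) (ε : Fin n → ℝ) (hε : ∀ j, ε j = 1 ∨ ε j = -1) :
    (sperm σ ε) * (sperm σ ε)ᵀ = 1 := by
  rw [← mul_eq_one_comm]
  ext a b
  rw [Matrix.mul_apply]
  by_cases hab : a = b
  · subst hab
    rw [Finset.sum_eq_single (σ a)]
    · simp [sperm]
      rcases hε a with h | h <;> rw [h] <;> norm_num
    · intro i _ hi; simp [sperm, transpose_apply, hi]
    · simp
  · have : ∀ i : Fin n, sperm σ ε i a * sperm σ ε i b = 0 := by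
      intro i
      simp only [sperm, Matrix.of_apply]
      by_cases h1 : i = σ a
      · have h2 : i ≠ σ b := by
          rw [h1]; exact fun h => hab (σ.injective h)
        simp [h2]
      · simp [h1]
    simp [this, Matrix.one_apply_ne hab]

lemma sperm_det (σ : Equiv.Perm (Fin n)) (ε : Fin n → ℝ) :
    (sperm σ ε).det = ((Equiv.Perm.sign σ : ℤ) : ℝ) * ∏ j, ε j := by
  have : sperm σ ε = (Equiv.Perm.permMatrix ℝ σ)ᵀ * Matrix.diagonal ε := by
    ext i j
    simp [sperm, Matrix.mul_diagonal, Equiv.Perm.permMatrix, PEquiv.toMatrix,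
      Equiv.toPEquiv, transpose_apply, eq_comm]
  rw [this, Matrix.det_mul, Matrix.det_transpose, Matrix.det_permutation, Matrix.det_diagonal]

lemma Ebasis_apply {p q : Fin n} (hpq : p ≠ q) (i j : Fin n) :
    Ebasis p q i j = if p = i ∧ q = j then (Real.sqrt 2)⁻¹
      else if q = i ∧ p = j then -(Real.sqrt 2)⁻¹ else 0 := by
  simp only [Ebasis, Matrix.smul_apply, Matrix.sub_apply, Matrix.single, Matrix.of_apply,
    smul_eq_mul]
  split_ifs with h1 h2
  · exact absurd (h1.1.trans h2.1.symm) hpq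
  · ring
  · ring
  · ring

lemma exists_SO_conj (hn : 2 ≤ n) (p q r s : Fin n) (hpq : p < q) (hrs : r < s) :
    ∃ P ∈ SO n, (P)ᵀ * Ebasis p q * P = Ebasis r s := by
  by_cases hc : p = r ∧ q = s
  · refine ⟨1, ⟨by simp, by simp⟩, by rw [hc.1, hc.2]; simp⟩
  · -- n ≥ 3
    have h3 : 3 ≤ n := by
      by_contra h
      have hn2 : n = 2 := by omega
      subst hn2
      apply hc
      have h1 := p.isLt; have h2 := q.isLt; have h3 := r.isLt; have h4 := s.isLt
      rw [Fin.lt_def] at hpq hrs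
      constructor <;> apply Fin.ext <;> omega
    obtain ⟨k, hkr, hks⟩ : ∃ k : Fin n, k ≠ r ∧ k ≠ s := by
      by_contra h
      push_neg at h
      have hsub : (Finset.univ : Finset (Fin n)) ⊆ {r, s} := by
        intro x _
        by_cases hx : x = r
        · simp [hx]
        · simp [h x hx]
      have := Finset.card_le_card hsub
      simp [Finset.card_univ] at this
      have := Finset.card_insert_le r ({s} : Finset (Fin n))
      simp at this
      omega
    have hrs' : r ≠ s := ne_of_lt hrs
    have hpq' : p ≠ q := ne_of_lt hpq
    set τ := Equiv.swap r p with hτ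
    have hτr : τ r = p := Equiv.swap_apply_left r p
    have hτs : τ s ≠ p := by
      intro h
      rcases eq_or_ne s p with h1 | h1
      · rw [hτ] at h
        rw [h1, Equiv.swap_apply_right] at h
        -- h : r = p, h1 : s = p so r = s
        exact hrs' (h.trans h1.symm)
      · rw [hτ, Equiv.swap_apply_of_ne_of_ne hrs'.symm h1] at h
        exact h1 h
    set σ := τ.trans (Equiv.swap (τ s) q) with hσ
    have hσr : σ r = p := by
      rw [hσ]
      simp only [Equiv.trans_apply, hτr]
      exact Equiv.swap_apply_of_ne_of_ne (Ne.symm hτs) hpq'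
    have hσs : σ s = q := by
      rw [hσ]
      simp only [Equiv.trans_apply]
      exact Equiv.swap_apply_left _ _
    set ε : Fin n → ℝ := fun j =>
      if Equiv.Perm.sign σ = 1 then 1 else if j = k then -1 else 1 with hε
    have hε1 : ∀ j, ε j = 1 ∨ ε j = -1 := by
      intro j; rw [hε]; dsimp only; split_ifs <;> simp
    have hεr : ε r = 1 := by rw [hε]; dsimp only; split_ifs with h1 h2 <;> simp_all [hkr.symm]
    have hεs : ε s = 1 := by rw [hε]; dsimp only; split_ifs with h1 h2 <;> simp_all [hks.symm]
    have hdet : (sperm σ ε).det = 1 := by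
      rw [sperm_det]
      rcases Int.units_eq_one_or (Equiv.Perm.sign σ) with h | h
      · have : ε = fun _ => 1 := by funext j; rw [hε]; simp [h]
        rw [h, this]
        simp
      · have hs1 : Equiv.Perm.sign σ ≠ 1 := by rw [h]; decide
        have : ∏ j, ε j = -1 := by
          have : ε = fun j => if j = k then -1 else 1 := by funext j; rw [hε]; simp [hs1]
          rw [this, Finset.prod_ite_eq' Finset.univ k (fun _ => (-1 : ℝ))]
          simp
        rw [h, this]
        norm_num
    refine ⟨sperm σ ε, ⟨sperm_orth σ ε hε1, hdet⟩, ?_⟩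
    ext a b
    rw [sperm_conj_apply, Ebasis_apply hpq', Ebasis_apply hrs']
    have e1 : (p = σ a) ↔ (r = a) := by
      rw [← hσr]; exact ⟨fun h => (σ.injective h.symm).symm, fun h => by rw [h]⟩
    have e2 : (q = σ b) ↔ (s = b) := by
      rw [← hσs]; exact ⟨fun h => (σ.injective h.symm).symm, fun h => by rw [h]⟩
    have e3 : (q = σ a) ↔ (s = a) := by
      rw [← hσs]; exact ⟨fun h => (σ.injective h.symm).symm, fun h => by rw [h]⟩
    have e4 : (p = σ b) ↔ (r = b) := by
      rw [← hσr]; exact ⟨fun h => (σ.injective h.symm).symm, fun h => by rw [h]⟩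
    simp only [e1, e2, e3, e4]
    split_ifs with h1 h2
    · obtain ⟨rfl, rfl⟩ := h1; rw [hεr, hεs]; ring
    · obtain ⟨rfl, rfl⟩ := h2; rw [hεr, hεs]; ring
    · ring

/-- conjugation by `Q` as a continuous linear map -/
def conjCLM (Q : Matrix (Fin n) (Fin n) ℝ) :
    Matrix (Fin n) (Fin n) ℝ →L[ℝ] Matrix (Fin n) (Fin n) ℝ :=
  LinearMap.toContinuousLinearMap
    { toFun := fun W => Q * W * Qᵀ
      map_add' := fun W₁ W₂ => by simp [Matrix.mul_add, Matrix.add_mul]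
      map_smul' := fun c W => by simp [Matrix.mul_smul, Matrix.smul_mul] }

@[simp] lemma conjCLM_apply (Q W : Matrix (Fin n) (Fin n) ℝ) : conjCLM Q W = Q * W * Qᵀ := rfl

lemma fderiv_eq_sum (f : Matrix (Fin n) (Fin n) ℝ → ℝ) (Z M : Matrix (Fin n) (Fin n) ℝ) :
    fderiv ℝ f Z M = ∑ a, ∑ b, M a b * grad f Z a b := by
  conv_lhs => rw [Matrix.matrix_eq_sum_single M]
  rw [map_sum]
  refine Finset.sum_congr rfl fun a _ => ?_
  rw [map_sum]
  refine Finset.sum_congr rfl fun b _ => ?_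
  have : Matrix.single a b (M a b) = (M a b) • Matrix.single a b 1 := by
    rw [Matrix.smul_single, smul_eq_mul, mul_one]
  rw [this, (fderiv ℝ f Z).map_smul, smul_eq_mul]
  rfl

lemma grad_conj {f : Matrix (Fin n) (Fin n) ℝ → ℝ} (hf : ContDiff ℝ 1 f)
    {Q : Matrix (Fin n) (Fin n) ℝ} (hQ1 : Q * Qᵀ = 1)
    (hspec : ∀ Z, f (Q * Z * Qᵀ) = f Z) (Z : Matrix (Fin n) (Fin n) ℝ) :
    grad f (Q * Z * Qᵀ) = Q * grad f Z * Qᵀ := by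
  have hQ2 : Qᵀ * Q = 1 := mul_eq_one_comm.mp hQ1
  have hdf : Differentiable ℝ f := hf.differentiable one_ne_zero
  have hcomp : f ∘ (conjCLM Q) = f := funext fun W => hspec W
  have key : ∀ H, fderiv ℝ f Z H = fderiv ℝ f (Q * Z * Qᵀ) (Q * H * Qᵀ) := by
    intro H
    conv_lhs => rw [← hcomp]
    erw [fderiv_comp Z (hdf _) (conjCLM Q).differentiableAt,
      (conjCLM Q).fderiv]
    rfl
  ext i j
  have h1 : (Matrix.single i j 1 : Matrix (Fin n) (Fin n) ℝ)
      = Q * (Qᵀ * Matrix.single i j 1 * Q) * Qᵀ := by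
    rw [← Matrix.mul_assoc, ← Matrix.mul_assoc, hQ1, Matrix.one_mul,
      Matrix.mul_assoc, hQ1, Matrix.mul_one]
  have h2 : grad f (Q * Z * Qᵀ) i j
      = fderiv ℝ f Z (Qᵀ * Matrix.single i j 1 * Q) := by
    show fderiv ℝ f (Q * Z * Qᵀ) (Matrix.single i j 1) = _
    rw [key]
    rw [← h1]
  rw [h2, fderiv_eq_sum]
  have h3 : ∀ a b, (Qᵀ * Matrix.single i j 1 * Q : Matrix (Fin n) (Fin n) ℝ) a b = Q i a * Q j b := by
    intro a b
    rw [Matrix.mul_apply]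
    simp only [Matrix.mul_apply, Matrix.single, Matrix.of_apply, transpose_apply]
    simp [Finset.mul_sum, ite_mul, mul_ite, Finset.sum_ite_eq]
    rw [Finset.sum_eq_single j]
    · simp
    · intro x _ hx; simp [Ne.symm hx]
    · simp
  simp only [h3]
  rw [Matrix.mul_apply]
  simp only [Matrix.mul_apply, transpose_apply]
  rw [Finset.sum_comm]
  refine Finset.sum_congr rfl fun a _ => ?_
  rw [Finset.sum_mul]
  refine Finset.sum_congr rfl fun b _ => ?_
  ring

lemma skewPart_conj {Q : Matrix (Fin n) (Fin n) ℝ} (A : Matrix (Fin n) (Fin n) ℝ) :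
    skewPart (Q * A * Qᵀ) = Q * skewPart A * Qᵀ := by
  simp only [skewPart, Matrix.transpose_mul, Matrix.transpose_transpose,
    Matrix.smul_mul, Matrix.mul_smul, Matrix.mul_sub, Matrix.sub_mul, Matrix.mul_assoc]

lemma scoreG_conj {f : Matrix (Fin n) (Fin n) ℝ → ℝ} (hf : ContDiff ℝ 1 f)
    {Q : Matrix (Fin n) (Fin n) ℝ} (hQ1 : Q * Qᵀ = 1)
    (hspec : ∀ Z, f (Q * Z * Qᵀ) = f Z) (Z : Matrix (Fin n) (Fin n) ℝ) :
    scoreG f (Q * Z * Qᵀ) = Q * scoreG f Z * Qᵀ := by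
  have hQ2 : Qᵀ * Q = 1 := mul_eq_one_comm.mp hQ1
  rw [scoreG, scoreG, hspec, grad_conj hf hQ1 hspec]
  have : (Q * grad f Z * Qᵀ)ᵀ * (Q * Z * Qᵀ) = Q * ((grad f Z)ᵀ * Z) * Qᵀ := by
    simp only [Matrix.transpose_mul, Matrix.transpose_transpose, Matrix.mul_assoc]
    rw [← Matrix.mul_assoc Qᵀ Q, hQ2, Matrix.one_mul]
  rw [this, skewPart_conj, Matrix.mul_smul, Matrix.smul_mul]

lemma frobInner_conj {Q : Matrix (Fin n) (Fin n) ℝ} (hQ2 : Qᵀ * Q = 1)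
    (A B : Matrix (Fin n) (Fin n) ℝ) :
    frobInner (Q * A * Qᵀ) B = frobInner A (Qᵀ * B * Q) := by
  simp only [frobInner, Matrix.transpose_mul, Matrix.transpose_transpose, ← Matrix.mul_assoc]
  conv_rhs => rw [Matrix.trace_mul_comm]
  simp only [← Matrix.mul_assoc]

-- continuity of all pieces
lemma continuous_grad {f : Matrix (Fin n) (Fin n) ℝ → ℝ} (hf : ContDiff ℝ 1 f) :
    Continuous fun Z => grad f Z := by
  have h1 : Continuous (fderiv ℝ f) := hf.continuous_fderiv one_ne_zero
  apply continuous_matrix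
  intro i j
  exact (ContinuousLinearMap.apply ℝ ℝ (Matrix.single i j 1)).continuous.comp h1

lemma continuous_hFun {f : Matrix (Fin n) (Fin n) ℝ → ℝ} (hf : ContDiff ℝ 1 f)
    (hpos : ∀ Z, 0 < f Z) (B : Matrix (Fin n) (Fin n) ℝ) :
    Continuous fun Z => frobInner (scoreG f Z) B := by
  have hsG : Continuous fun Z => scoreG f Z := by
    refine Continuous.smul (f := fun Z => (f Z)⁻¹) (g := fun Z => skewPart ((grad f Z)ᵀ * Z)) ?_ ?_
    · exact (hf.continuous.inv₀ fun Z => (hpos Z).ne')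
    · unfold skewPart
      refine Continuous.const_smul (g := fun Z => (grad f Z)ᵀ * Z - ((grad f Z)ᵀ * Z)ᵀ) ?_ (2:ℝ)⁻¹
      apply Continuous.sub
      · exact ((continuous_grad hf).matrix_transpose).matrix_mul continuous_id
      · exact (((continuous_grad hf).matrix_transpose).matrix_mul continuous_id).matrix_transpose
  unfold frobInner
  exact ((hsG.matrix_transpose).matrix_mul continuous_const).matrix_trace


instance {n : ℕ} : BorelSpace (Matrix (Fin n) (Fin n) ℝ) := Pi.borelSpace

lemma SO_mul {A B : Matrix (Fin n) (Fin n) ℝ} (hA : A ∈ SO n) (hB : B ∈ SO n) :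
    A * B ∈ SO n := by
  constructor
  · rw [Matrix.transpose_mul, Matrix.mul_assoc, ← Matrix.mul_assoc B, hB.1, Matrix.one_mul, hA.1]
  · rw [Matrix.det_mul, hA.2, hB.2, one_mul]

lemma SO_transpose {A : Matrix (Fin n) (Fin n) ℝ} (hA : A ∈ SO n) : Aᵀ ∈ SO n := by
  constructor
  · rw [Matrix.transpose_transpose]; exact mul_eq_one_comm.mp hA.1
  · rw [Matrix.det_transpose]; exact hA.2

lemma measurableSet_SO : MeasurableSet (SO n) := by
  have h1 : MeasurableSet {A : Matrix (Fin n) (Fin n) ℝ | A * Aᵀ = 1} := by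
    have hc : Continuous fun A : Matrix (Fin n) (Fin n) ℝ => A * Aᵀ :=
      continuous_id.matrix_mul continuous_id.matrix_transpose
    exact (isClosed_singleton.preimage hc).measurableSet
  have h2 : MeasurableSet {A : Matrix (Fin n) (Fin n) ℝ | A.det = 1} := by
    have hc : Continuous fun A : Matrix (Fin n) (Fin n) ℝ => A.det :=
      continuous_id.matrix_det
    exact (isClosed_singleton.preimage hc).measurableSet
  exact h1.inter h2

lemma map_conj_eq {μ : Measure (Matrix (Fin n) (Fin n) ℝ)} (hμ : IsHaarSO n μ)
    {Q : Matrix (Fin n) (Fin n) ℝ} (hQ : Q ∈ SO n) :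
    Measure.map (fun Z => Q * Z * Qᵀ) μ = μ := by
  have hQT : Qᵀ ∈ SO n := SO_transpose hQ
  have m1 : Measurable fun Z : Matrix (Fin n) (Fin n) ℝ => Q * Z :=
    (continuous_const.matrix_mul continuous_id).measurable
  have m2 : Measurable fun Z : Matrix (Fin n) (Fin n) ℝ => Z * Qᵀ :=
    (continuous_id.matrix_mul continuous_const).measurable
  have hcomp : (fun Z : Matrix (Fin n) (Fin n) ℝ => Q * Z * Qᵀ)
      = (fun Z => Z * Qᵀ) ∘ (fun Z => Q * Z) := rfl
  rw [hcomp, ← Measure.map_map m2 m1, hμ.2.2.1 Q hQ, hμ.2.2.2 Qᵀ hQT]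

end Aux

theorem stmt6 {n : ℕ} (hn : 2 ≤ n) (μ : Measure (Matrix (Fin n) (Fin n) ℝ))
    (hμ : IsHaarSO n μ) (f : Matrix (Fin n) (Fin n) ℝ → ℝ)
    (hf : ContDiff ℝ 1 f) (hpos : ∀ Z, 0 < f Z)
    (hspec : ∀ Q ∈ ON n, ∀ Z, f (Q * Z * Qᵀ) = f Z)
    (hnorm : ∫ Z, f Z ∂μ = 1)
    (R : Matrix (Fin n) (Fin n) ℝ) (hR : R ∈ SO n)
    (p q r s : Fin n) (hpq : p < q) (hrs : r < s) :
    ∀ t : ℝ,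
      ∫ Z in {Z | Z ∈ SO n ∧ hFun f R p q Z ≤ t}, f Z ∂μ =
        ∫ Z in {Z | Z ∈ SO n ∧ hFun f R r s Z ≤ t}, f Z ∂μ := by
  intro t
  obtain ⟨P, hP, hPE⟩ := exists_SO_conj hn p q r s hpq hrs
  have hRT : Rᵀ * R = 1 := mul_eq_one_comm.mp hR.1
  set Q := R * P * Rᵀ with hQdef
  have hQ : Q ∈ SO n := SO_mul (SO_mul hR hP) (SO_transpose hR)
  have hQ1 : Q * Qᵀ = 1 := hQ.1
  have hQ2 : Qᵀ * Q = 1 := mul_eq_one_comm.mp hQ1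
  have hfspec : ∀ Z, f (Q * Z * Qᵀ) = f Z := fun Z => hspec Q hQ.1 Z
  have hcan : ∀ X : Matrix (Fin n) (Fin n) ℝ, Rᵀ * (R * X) = X := fun X => by
    rw [← Matrix.mul_assoc, hRT, Matrix.one_mul]
  have hPE' : ∀ X : Matrix (Fin n) (Fin n) ℝ,
      Pᵀ * (Ebasis p q * (P * X)) = Ebasis r s * X := fun X => by
    rw [← Matrix.mul_assoc, ← Matrix.mul_assoc, hPE]
  have hQT : Qᵀ = R * Pᵀ * Rᵀ := by
    rw [hQdef]
    simp [Matrix.transpose_mul, Matrix.mul_assoc]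
  have hkey : ∀ Z, hFun f R p q (Q * Z * Qᵀ) = hFun f R r s Z := by
    intro Z
    unfold hFun
    rw [scoreG_conj hf hQ1 hfspec, frobInner_conj hQ2]
    congr 1
    rw [hQT, hQdef]
    simp only [Matrix.mul_assoc, hcan, hPE']
  have hTmeas : Measurable fun Z : Matrix (Fin n) (Fin n) ℝ => Q * Z * Qᵀ :=
    ((continuous_const.matrix_mul continuous_id).matrix_mul continuous_const).measurable
  have hSOiff : ∀ Z : Matrix (Fin n) (Fin n) ℝ, (Q * Z * Qᵀ ∈ SO n) ↔ Z ∈ SO n := by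
    intro Z
    constructor
    · intro h
      have h2 := SO_mul (SO_mul (SO_transpose hQ) h) hQ
      have e : Qᵀ * (Q * Z * Qᵀ) * Q = Z := by
        calc Qᵀ * (Q * Z * Qᵀ) * Q = Qᵀ * Q * Z * (Qᵀ * Q) := by
              simp only [Matrix.mul_assoc]
          _ = Z := by rw [hQ2, Matrix.one_mul, Matrix.mul_one]
      rwa [e] at h2
    · intro h
      exact SO_mul (SO_mul hQ h) (SO_transpose hQ)
  have hpre : (fun Z : Matrix (Fin n) (Fin n) ℝ => Q * Z * Qᵀ) ⁻¹'
      {Z | Z ∈ SO n ∧ hFun f R p q Z ≤ t} = {Z | Z ∈ SO n ∧ hFun f R r s Z ≤ t} := by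
    ext Z
    simp only [Set.mem_preimage, Set.mem_setOf_eq, hkey Z, hSOiff Z]
  have hhcont : Continuous (hFun f R p q) :=
    continuous_hFun hf hpos (R * Ebasis p q * Rᵀ)
  have hmeasA : MeasurableSet {Z | Z ∈ SO n ∧ hFun f R p q Z ≤ t} :=
    measurableSet_SO.inter (measurableSet_le hhcont.measurable measurable_const)
  calc ∫ Z in {Z | Z ∈ SO n ∧ hFun f R p q Z ≤ t}, f Z ∂μ
      = ∫ Z in {Z | Z ∈ SO n ∧ hFun f R p q Z ≤ t}, f Z
          ∂(Measure.map (fun Z => Q * Z * Qᵀ) μ) := by rw [map_conj_eq hμ hQ]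
    _ = ∫ Z in (fun Z : Matrix (Fin n) (Fin n) ℝ => Q * Z * Qᵀ) ⁻¹'
          {Z | Z ∈ SO n ∧ hFun f R p q Z ≤ t}, f (Q * Z * Qᵀ) ∂μ :=
        setIntegral_map hmeasA (show Continuous f from hf.continuous).aestronglyMeasurable hTmeas.aemeasurable
    _ = ∫ Z in {Z | Z ∈ SO n ∧ hFun f R r s Z ≤ t}, f Z ∂μ := by
        rw [hpre]
        simp only [hfspec]
end
end

section
/- Let n ≥ 1, let μ be the Haar probability measure on SO(n), and let f : SO(n) → ℝ be a probability density with respect to μ (f ≥ 0, ∫_{SO(n)} f dμ = 1) that is spectral: f(QZQᵀ) = f(Z) for every Q ∈ O(n) and Z ∈ SO(n). Let Φ : SO(n) → ℝ^{n×n} be a measurable map, integrable with respect to f·μ, such that Φ(Z) is skew-symmetric for every Z and Φ is equivariant: Φ(QZQᵀ) = Q·Φ(Z)·Qᵀ for every Q ∈ O(n) and Z ∈ SO(n). Then the mean vanishes: ∫_{SO(n)} Φ(Z) f(Z) dμ(Z) = 0. (In particular, every spectral probability density on SO(n) has zero bias around the identity, the case Φ = matrix logarithm.) -/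
open Matrix MeasureTheory Real

noncomputable section

instance {n : ℕ} : MeasurableSingletonClass (Matrix (Fin n) (Fin n) ℝ) :=
  (inferInstance : MeasurableSingletonClass (Fin n → Fin n → ℝ))

lemma measurable_entry {n : ℕ} (i j : Fin n) :
    Measurable (fun Z : Matrix (Fin n) (Fin n) ℝ => Z i j) :=
  (measurable_pi_apply j).comp (measurable_pi_apply i)

lemma measurable_mul_left {n : ℕ} (Q : Matrix (Fin n) (Fin n) ℝ) :
    Measurable (fun Z : Matrix (Fin n) (Fin n) ℝ => Q * Z) := by
  apply measurable_pi_lambda; intro i; apply measurable_pi_lambda; intro j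
  simp only [Matrix.mul_apply]
  exact Finset.measurable_sum _ fun k _ => (measurable_entry k j).const_mul _

lemma measurable_mul_right {n : ℕ} (Q : Matrix (Fin n) (Fin n) ℝ) :
    Measurable (fun Z : Matrix (Fin n) (Fin n) ℝ => Z * Q) := by
  apply measurable_pi_lambda; intro i; apply measurable_pi_lambda; intro j
  simp only [Matrix.mul_apply]
  exact Finset.measurable_sum _ fun k _ => (measurable_entry i k).mul_const _

lemma measurable_conj {n : ℕ} (Q : Matrix (Fin n) (Fin n) ℝ) :
    Measurable (fun Z : Matrix (Fin n) (Fin n) ℝ => Q * Z * Qᵀ) :=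
  (measurable_mul_right Qᵀ).comp (measurable_mul_left Q)

lemma ON_inv {n : ℕ} {Q : Matrix (Fin n) (Fin n) ℝ} (hQ : Q ∈ ON n) : Qᵀ * Q = 1 :=
  mul_eq_one_comm.mp hQ

lemma conj_mem_SO {n : ℕ} {Q Z : Matrix (Fin n) (Fin n) ℝ} (hQ : Q ∈ ON n) (hZ : Z ∈ SO n) :
    Q * Z * Qᵀ ∈ SO n := by
  obtain ⟨hZ1, hZ2⟩ := hZ
  constructor
  · have h : (Q * Z * Qᵀ) * (Q * Z * Qᵀ)ᵀ = Q * (Z * (Qᵀ * Q) * Zᵀ) * Qᵀ := by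
      simp [Matrix.transpose_mul, Matrix.transpose_transpose, Matrix.mul_assoc]
    rw [h, ON_inv hQ, Matrix.mul_one, hZ1, Matrix.mul_one, hQ]
  · have hdet : Q.det * Q.det = 1 := by
      have := congrArg Matrix.det hQ
      simpa [Matrix.det_mul, Matrix.det_transpose] using this
    simp [Matrix.det_mul, Matrix.det_transpose, hZ2]
    nlinarith [hdet]

lemma conj_invariant {n : ℕ} (μ : Measure (Matrix (Fin n) (Fin n) ℝ))
    (hμ : IsHaarSO n μ) {Q : Matrix (Fin n) (Fin n) ℝ} (hQ : Q ∈ ON n) :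
    Measure.map (fun Z => Q * Z * Qᵀ) μ = μ := by
  obtain ⟨hprob, hnull, hleft, hright⟩ := hμ
  set T : Matrix (Fin n) (Fin n) ℝ → Matrix (Fin n) (Fin n) ℝ := fun Z => Q * Z * Qᵀ with hT
  have hTm : Measurable T := measurable_conj Q
  set ν := Measure.map T μ with hν
  have hνprob : IsProbabilityMeasure ν := Measure.isProbabilityMeasure_map hTm.aemeasurable
  -- ν is null on (SO n)ᶜ
  have hSOmeas : MeasurableSet (SO n) := by
    have h1 : Measurable (fun A : Matrix (Fin n) (Fin n) ℝ => A * Aᵀ) := by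
      apply measurable_pi_lambda; intro i; apply measurable_pi_lambda; intro j
      simp only [Matrix.mul_apply, Matrix.transpose_apply]
      exact Finset.measurable_sum _ fun k _ => (measurable_entry i k).mul (measurable_entry j k)
    have h2 : Measurable (fun A : Matrix (Fin n) (Fin n) ℝ => A.det) := by
      simp only [Matrix.det_apply]
      exact Finset.measurable_sum _ fun σ _ =>
        (Finset.measurable_prod _ fun k _ => measurable_entry (σ k) k).const_smul _
    have : SO n = (fun A => A * Aᵀ) ⁻¹' {1} ∩ (fun A : Matrix (Fin n) (Fin n) ℝ => A.det) ⁻¹' {1} := by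
      ext A; simp [SO, Set.mem_setOf_eq]
    rw [this]
    exact (h1 (measurableSet_singleton 1)).inter (h2 (measurableSet_singleton 1))
  have hνnull : ν (SO n)ᶜ = 0 := by
    rw [hν, Measure.map_apply hTm hSOmeas.compl]
    refine measure_mono_null ?_ hnull
    intro Z hZ
    simp only [Set.mem_preimage, Set.mem_compl_iff] at hZ ⊢
    intro hZSO; exact hZ (conj_mem_SO hQ hZSO)
  -- ν is left invariant
  have hνleft : ∀ g ∈ SO n, Measure.map (fun Z => g * Z) ν = ν := by
    intro g hg
    have hgON : Q * Qᵀ = 1 := hQ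
    have hmem : Qᵀ * g * Q ∈ SO n := by
      have : Qᵀ ∈ ON n := by simpa [ON, Matrix.transpose_transpose] using ON_inv hQ
      have := conj_mem_SO this hg
      simpa using this
    rw [hν, Measure.map_map (measurable_mul_left g) hTm]
    have hcomp : ((fun Z => g * Z) ∘ T) = T ∘ (fun Z => (Qᵀ * g * Q) * Z) := by
      funext Z
      simp only [Function.comp_apply, hT]
      have h1 : Qᵀ * Q = 1 := ON_inv hQ
      calc g * (Q * Z * Qᵀ) = Q * (Qᵀ * g * Q) * Z * Qᵀ := by
            rw [show Q * (Qᵀ * g * Q) = (Q * Qᵀ) * g * Q by noncomm_ring, hgON]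
            noncomm_ring
        _ = Q * ((Qᵀ * g * Q) * Z) * Qᵀ := by noncomm_ring
    rw [hcomp, ← Measure.map_map hTm (measurable_mul_left _), hleft _ hmem]
  -- uniqueness via Fubini
  ext A hA
  have haeμ : ∀ᵐ Z ∂μ, Z ∈ SO n := by
    rw [MeasureTheory.ae_iff]; exact hnull
  have haeν : ∀ᵐ Z ∂ν, Z ∈ SO n := by
    rw [MeasureTheory.ae_iff]; exact hνnull
  have hmul : Measurable (fun p : Matrix (Fin n) (Fin n) ℝ × Matrix (Fin n) (Fin n) ℝ => p.1 * p.2) := by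
    apply measurable_pi_lambda; intro i; apply measurable_pi_lambda; intro j
    simp only [Matrix.mul_apply]
    exact Finset.measurable_sum _ fun k _ =>
      ((measurable_entry i k).comp measurable_fst).mul ((measurable_entry k j).comp measurable_snd)
  have hind : Measurable (fun p : Matrix (Fin n) (Fin n) ℝ × Matrix (Fin n) (Fin n) ℝ =>
      A.indicator (1 : Matrix (Fin n) (Fin n) ℝ → ENNReal) (p.1 * p.2)) :=
    (measurable_one.indicator hA).comp hmul
  have hswap := lintegral_lintegral_swap (μ := μ) (ν := ν)
    (f := fun z w => A.indicator (1 : Matrix (Fin n) (Fin n) ℝ → ENNReal) (z * w)) hind.aemeasurable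
  have h1 : ∫⁻ z, ∫⁻ w, A.indicator (1 : Matrix (Fin n) (Fin n) ℝ → ENNReal) (z * w) ∂ν ∂μ = ν A := by
    have : ∀ᵐ z ∂μ, ∫⁻ w, A.indicator (1 : Matrix (Fin n) (Fin n) ℝ → ENNReal) (z * w) ∂ν = ν A := by
      filter_upwards [haeμ] with z hz
      have : ∫⁻ w, A.indicator (1 : Matrix (Fin n) (Fin n) ℝ → ENNReal) (z * w) ∂ν
          = ∫⁻ w, A.indicator (1 : Matrix (Fin n) (Fin n) ℝ → ENNReal) w ∂(Measure.map (fun w => z * w) ν) :=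
        (lintegral_map (measurable_one.indicator hA) (measurable_mul_left z)).symm
      rw [this, hνleft z hz, lintegral_indicator hA]
      simp
    rw [lintegral_congr_ae this]
    simp
  have h2 : ∫⁻ w, ∫⁻ z, A.indicator (1 : Matrix (Fin n) (Fin n) ℝ → ENNReal) (z * w) ∂μ ∂ν = μ A := by
    have : ∀ᵐ w ∂ν, ∫⁻ z, A.indicator (1 : Matrix (Fin n) (Fin n) ℝ → ENNReal) (z * w) ∂μ = μ A := by
      filter_upwards [haeν] with w hw
      have : ∫⁻ z, A.indicator (1 : Matrix (Fin n) (Fin n) ℝ → ENNReal) (z * w) ∂μ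
          = ∫⁻ z, A.indicator (1 : Matrix (Fin n) (Fin n) ℝ → ENNReal) z ∂(Measure.map (fun z => z * w) μ) :=
        (lintegral_map (measurable_one.indicator hA) (measurable_mul_right w)).symm
      rw [this, hright w hw, lintegral_indicator hA]
      simp
    rw [lintegral_congr_ae this]
    simp
  rw [← h1, hswap, h2]

theorem stmt12 {n : ℕ} (hn : 1 ≤ n) (μ : Measure (Matrix (Fin n) (Fin n) ℝ))
    (hμ : IsHaarSO n μ) (f : Matrix (Fin n) (Fin n) ℝ → ℝ)
    (hfm : Measurable f) (hnn : ∀ Z, 0 ≤ f Z) (hnorm : ∫ Z, f Z ∂μ = 1)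
    (hspec : ∀ Q ∈ ON n, ∀ Z ∈ SO n, f (Q * Z * Qᵀ) = f Z)
    (Φ : Matrix (Fin n) (Fin n) ℝ → Matrix (Fin n) (Fin n) ℝ)
    (hΦm : Measurable Φ)
    (hΦint : ∀ i j, Integrable (fun Z => Φ Z i j * f Z) μ)
    (hΦskew : ∀ Z ∈ SO n, (Φ Z)ᵀ = -Φ Z)
    (hΦequiv : ∀ Q ∈ ON n, ∀ Z ∈ SO n, Φ (Q * Z * Qᵀ) = Q * Φ Z * Qᵀ) :
    ∀ i j, ∫ Z, Φ Z i j * f Z ∂μ = 0 := by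
  intro i j
  have haeμ : ∀ᵐ Z ∂μ, Z ∈ SO n := by
    rw [MeasureTheory.ae_iff]; exact hμ.2.1
  have hFmeas : Measurable (fun Z => Φ Z i j * f Z) :=
    ((measurable_entry i j).comp hΦm).mul hfm
  by_cases hij : i = j
  · subst hij
    have : ∀ᵐ Z ∂μ, Φ Z i i * f Z = 0 := by
      filter_upwards [haeμ] with Z hZ
      have := congrFun (congrFun (hΦskew Z hZ) i) i
      simp only [Matrix.transpose_apply, Matrix.neg_apply] at this
      have : Φ Z i i = 0 := by linarith
      simp [this]
    rw [integral_congr_ae this, integral_zero]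
  · -- sign-flip matrix
    set d : Fin n → ℝ := fun k => if k = i then -1 else 1 with hd
    set D := Matrix.diagonal d with hD
    have hDON : D ∈ ON n := by
      show D * Dᵀ = 1
      rw [hD, Matrix.diagonal_transpose, Matrix.diagonal_mul_diagonal,
        show (fun k => d k * d k) = fun _ => (1:ℝ) from
          funext fun k => by by_cases hk : k = i <;> simp [hd, hk],
        Matrix.diagonal_one]
    have hDT : Dᵀ = D := by rw [hD, Matrix.diagonal_transpose]
    have hflip : ∀ᵐ Z ∂μ, Φ (D * Z * Dᵀ) i j * f (D * Z * Dᵀ) = -(Φ Z i j * f Z) := by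
      filter_upwards [haeμ] with Z hZ
      rw [hspec D hDON Z hZ, hΦequiv D hDON Z hZ, hDT]
      have hij' : ¬ j = i := fun h => hij h.symm
      have h : (D * Φ Z * D) i j = -(Φ Z i j) := by
        rw [hD, Matrix.mul_diagonal, Matrix.diagonal_mul]
        simp [hd, hij']
      rw [h]; ring
    have hmap := conj_invariant μ hμ hDON
    have h0 : ∫ Z, Φ Z i j * f Z ∂μ = -∫ Z, Φ Z i j * f Z ∂μ := by
      conv_lhs => rw [← hmap]
      rw [integral_map (measurable_conj D).aemeasurable hFmeas.aestronglyMeasurable,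
        integral_congr_ae hflip, integral_neg]
    linarith
end
end
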